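/- arXiv:1911.03942 — 2 statements merged into one kernel-verified Lean document; each statement's English description precedes it below -/
import Mathlib

section
/- Let n, m, l be natural numbers with n + m + l even. Then I_{n,m,l} = (n+m−l−1)‼ · (n−m+l−1)‼ · (−n+m+l−1)‼, where the three arguments are odd integers (possibly negative) and ‼ denotes the extended double factorial. -/
open MeasureTheory Real

/-- Physicists' Hermite polynomials: `H 0 x = 1`, `H 1 x = 2x`,
`H (n+1) x = 2x * H n x - 2n * H (n-1) x`. -/
noncomputable def hermiteP : ℕ → ℝ → ℝ
  | 0, _ => 1
  | 1, x => 2 * x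
  | n + 2, x => 2 * x * hermiteP (n + 1) x - 2 * ((n : ℝ) + 1) * hermiteP n x

lemma hermiteP_succ_succ (n : ℕ) (x : ℝ) :
    hermiteP (n + 2) x = 2 * x * hermiteP (n + 1) x - 2 * ((n : ℝ) + 1) * hermiteP n x := rfl

/-- Poly functions -/
def PolyFun (f : ℝ → ℝ) : Prop := ∃ p : Polynomial ℝ, ∀ x, f x = p.eval x

lemma PolyFun.mul {f g : ℝ → ℝ} (hf : PolyFun f) (hg : PolyFun g) : PolyFun (fun x => f x * g x) := by
  obtain ⟨p, hp⟩ := hf; obtain ⟨q, hq⟩ := hg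
  exact ⟨p * q, fun x => by simp [hp, hq]⟩

lemma PolyFun.add {f g : ℝ → ℝ} (hf : PolyFun f) (hg : PolyFun g) : PolyFun (fun x => f x + g x) := by
  obtain ⟨p, hp⟩ := hf; obtain ⟨q, hq⟩ := hg
  exact ⟨p + q, fun x => by simp [hp, hq]⟩

lemma PolyFun.sub {f g : ℝ → ℝ} (hf : PolyFun f) (hg : PolyFun g) : PolyFun (fun x => f x - g x) := by
  obtain ⟨p, hp⟩ := hf; obtain ⟨q, hq⟩ := hg
  exact ⟨p - q, fun x => by simp [hp, hq]⟩

lemma PolyFun.const (c : ℝ) : PolyFun (fun _ => c) := ⟨Polynomial.C c, fun x => by simp⟩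

lemma PolyFun.const_mul {f : ℝ → ℝ} (hf : PolyFun f) (c : ℝ) : PolyFun (fun x => c * f x) :=
  (PolyFun.const c).mul hf

lemma PolyFun.id : PolyFun (fun x => x) := ⟨Polynomial.X, fun x => by simp⟩

lemma polyFun_hermiteP : ∀ n, PolyFun (hermiteP n) := by
  intro n
  induction n using Nat.strong_induction_on with
  | _ n ih =>
    match n with
    | 0 => exact ⟨1, fun x => by simp [hermiteP]⟩
    | 1 => exact ⟨Polynomial.C 2 * Polynomial.X, fun x => by simp [hermiteP]⟩
    | n + 2 =>
      have h1 := ih (n+1) (by omega)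
      have h0 := ih n (by omega)
      have : PolyFun (fun x => 2 * x * hermiteP (n+1) x - 2 * ((n:ℝ)+1) * hermiteP n x) := by
        exact ((PolyFun.id.const_mul 2).mul h1).sub (h0.const_mul (2 * ((n:ℝ)+1)))
      exact this

lemma integrable_pow_gauss (n : ℕ) : Integrable fun x : ℝ => x ^ n * Real.exp (-2 * x ^ 2) := by
  have := integrable_rpow_mul_exp_neg_mul_sq (b := 2) two_pos (s := (n : ℝ))
    (by exact_mod_cast neg_one_lt_zero.trans_le (Nat.cast_nonneg n))
  simpa [Real.rpow_natCast] using this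

lemma integrable_poly_gauss {f : ℝ → ℝ} (hf : PolyFun f) :
    Integrable fun x : ℝ => f x * Real.exp (-2 * x ^ 2) := by
  obtain ⟨p, hp⟩ := hf
  have : ∀ q : Polynomial ℝ, Integrable fun x : ℝ => q.eval x * Real.exp (-2 * x ^ 2) := by
    intro q
    induction q using Polynomial.induction_on' with
    | add p q hp hq => simpa [add_mul, Pi.add_def] using hp.add hq
    | monomial k a =>
      simpa [Polynomial.eval_monomial, mul_assoc] using (integrable_pow_gauss k).const_mul a
  simpa [hp] using this p

lemma polyFun_continuous {f : ℝ → ℝ} (hf : PolyFun f) : Continuous f := by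
  obtain ⟨p, hp⟩ := hf
  have : f = fun x => p.eval x := funext hp
  rw [this]; exact p.continuous

lemma hermiteP_hasDerivAt : ∀ n x, HasDerivAt (hermiteP n) (2 * n * hermiteP (n - 1) x) x := by
  intro n
  induction n using Nat.strong_induction_on with
  | _ n ih =>
    match n with
    | 0 =>
      intro x
      simpa [show hermiteP 0 = fun _ => (1:ℝ) from funext fun _ => rfl] using (hasDerivAt_const x (1:ℝ)).congr_deriv (by norm_num)
    | 1 =>
      intro x
      have : HasDerivAt (fun y : ℝ => 2 * y) (2 : ℝ) x := by
        simpa using (hasDerivAt_id x).const_mul (2:ℝ)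
      have h2 : HasDerivAt (hermiteP 1) (2:ℝ) x := this.congr_of_eventuallyEq (by
        filter_upwards with y; simp [hermiteP])
      simpa [hermiteP] using h2.congr_deriv (by norm_num)
    | n + 2 =>
      intro x
      have h1 := ih (n+1) (by omega)
      have h0 := ih n (by omega)
      have e1 : (n + 1 : ℕ) - 1 = n := rfl
      have d1 : HasDerivAt (fun y => 2 * y * hermiteP (n+1) y)
          (2 * hermiteP (n+1) x + 2 * x * (2 * ((n:ℝ)+1) * hermiteP n x)) x := by
        have h := (((hasDerivAt_id x).const_mul (2:ℝ)).mul (h1 x))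
        rw [e1] at h
        exact h.congr_deriv (by simp only [id]; push_cast; ring)
      have d0 : HasDerivAt (fun y => 2 * ((n:ℝ)+1) * hermiteP n y)
          (2 * ((n:ℝ)+1) * (2 * n * hermiteP (n-1) x)) x := (h0 x).const_mul _
      have d : HasDerivAt (hermiteP (n+2))
          (2 * hermiteP (n+1) x + 2 * x * (2 * ((n:ℝ)+1) * hermiteP n x)
            - 2 * ((n:ℝ)+1) * (2 * n * hermiteP (n-1) x)) x := by
        refine ((d1.sub d0).congr_of_eventuallyEq ?_)
        filter_upwards with y; rw [hermiteP_succ_succ]; rfl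
      have e2 : (n + 2 : ℕ) - 1 = n + 1 := rfl
      convert d using 1
      rw [e2]
      rcases n with _ | k
      · simp [hermiteP]; ring
      · have hr : hermiteP (k + 2) x
            = 2 * x * hermiteP (k+1) x - 2 * ((k:ℝ)+1) * hermiteP k x := hermiteP_succ_succ k x
        have e3 : (k + 1 : ℕ) - 1 = k := rfl
        rw [e3]
        push_cast
        nlinarith [hr]

lemma hermiteP_neg : ∀ n x, hermiteP n (-x) = (-1) ^ n * hermiteP n x := by
  intro n
  induction n using Nat.strong_induction_on with
  | _ n ih =>
    match n with
    | 0 => intro x; simp [hermiteP]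
    | 1 => intro x; simp [hermiteP]
    | n + 2 =>
      intro x
      rw [hermiteP_succ_succ, hermiteP_succ_succ, ih (n+1) (by omega), ih n (by omega)]
      ring

lemma hermiteP_succ (n : ℕ) (x : ℝ) :
    hermiteP (n + 1) x = 2 * x * hermiteP n x - 2 * (n : ℝ) * hermiteP (n - 1) x := by
  rcases n with _ | k
  · simp [hermiteP]
  · rw [hermiteP_succ_succ]; push_cast; ring_nf

noncomputable def Jint (n m l : ℕ) : ℝ :=
  ∫ x : ℝ, hermiteP n x * hermiteP m x * hermiteP l x * Real.exp (-2 * x ^ 2)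

lemma polyFun_H3 (n m l : ℕ) :
    PolyFun (fun x => hermiteP n x * hermiteP m x * hermiteP l x) :=
  ((polyFun_hermiteP n).mul (polyFun_hermiteP m)).mul (polyFun_hermiteP l)

lemma integrable_H3 (n m l : ℕ) :
    Integrable fun x : ℝ =>
      hermiteP n x * hermiteP m x * hermiteP l x * Real.exp (-2 * x ^ 2) :=
  integrable_poly_gauss (polyFun_H3 n m l)

lemma gauss_hasDerivAt (x : ℝ) :
    HasDerivAt (fun y : ℝ => Real.exp (-2 * y ^ 2)) (Real.exp (-2 * x ^ 2) * (-4 * x)) x := by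
  have h1 : HasDerivAt (fun y : ℝ => -2 * y ^ 2) (-4 * x) x := by
    have := (hasDerivAt_pow 2 x).const_mul (-2 : ℝ)
    exact this.congr_deriv (by push_cast; ring)
  simpa using h1.exp

lemma ibp (f f' : ℝ → ℝ) (hd : ∀ x, HasDerivAt f (f' x) x)
    (hf : PolyFun f) (hf' : PolyFun f') :
    ∫ x : ℝ, 2 * x * f x * Real.exp (-2 * x ^ 2)
      = (1 / 2) * ∫ x : ℝ, f' x * Real.exp (-2 * x ^ 2) := by
  have hg : ∀ x, HasDerivAt (fun y => f y * Real.exp (-2 * y ^ 2))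
      ((f' x - 4 * x * f x) * Real.exp (-2 * x ^ 2)) x := by
    intro x
    have := (hd x).mul (gauss_hasDerivAt x)
    exact this.congr_deriv (by ring)
  have hint' : Integrable fun x : ℝ => (f' x - 4 * x * f x) * Real.exp (-2 * x ^ 2) :=
    integrable_poly_gauss (hf'.sub ((PolyFun.id.const_mul 4).mul hf))
  have hint : Integrable fun x : ℝ => f x * Real.exp (-2 * x ^ 2) :=
    integrable_poly_gauss hf
  have h0 : ∫ x : ℝ, (f' x - 4 * x * f x) * Real.exp (-2 * x ^ 2) = 0 :=
    integral_eq_zero_of_hasDerivAt_of_integrable hg hint' hint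
  have hsplit : ∫ x : ℝ, (f' x - 4 * x * f x) * Real.exp (-2 * x ^ 2)
      = (∫ x : ℝ, f' x * Real.exp (-2 * x ^ 2))
        - ∫ x : ℝ, 4 * x * f x * Real.exp (-2 * x ^ 2) := by
    rw [← integral_sub (integrable_poly_gauss hf')
        (integrable_poly_gauss ((PolyFun.id.const_mul 4).mul hf))]
    congr 1; ext x; ring
  have h4 : ∫ x : ℝ, 4 * x * f x * Real.exp (-2 * x ^ 2)
      = 2 * ∫ x : ℝ, 2 * x * f x * Real.exp (-2 * x ^ 2) := by
    rw [← integral_const_mul]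
    congr 1; ext x; ring
  rw [hsplit, h4] at h0
  linarith

lemma Jint_rec (n m l : ℕ) :
    Jint (n + 1) m l
      = m * Jint n (m - 1) l + l * Jint n m (l - 1) - n * Jint (n - 1) m l := by
  have hsucc : Jint (n+1) m l
      = (∫ x : ℝ, 2 * x * (hermiteP n x * hermiteP m x * hermiteP l x)
          * Real.exp (-2 * x ^ 2))
        - 2 * n * Jint (n-1) m l := by
    unfold Jint
    rw [← integral_const_mul, ← integral_sub]
    · congr 1; ext x
      rw [hermiteP_succ]; ring
    · have := integrable_poly_gauss ((PolyFun.id.const_mul 2).mul (polyFun_H3 n m l))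
      apply this.congr
      filter_upwards with x; ring
    · simpa [mul_assoc] using (integrable_H3 (n-1) m l).const_mul (2 * (n:ℝ))
  have hd3 : ∀ x, HasDerivAt (fun y => hermiteP n y * hermiteP m y * hermiteP l y)
      (2*n*hermiteP (n-1) x * hermiteP m x * hermiteP l x
        + 2*m*(hermiteP n x * hermiteP (m-1) x * hermiteP l x)
        + 2*l*(hermiteP n x * hermiteP m x * hermiteP (l-1) x)) x := by
    intro x
    have := ((hermiteP_hasDerivAt n x).mul (hermiteP_hasDerivAt m x)).mul
      (hermiteP_hasDerivAt l x)
    exact this.congr_deriv (by simp only [Pi.mul_apply]; ring)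
  have hibp := ibp (fun y => hermiteP n y * hermiteP m y * hermiteP l y)
    (fun x => 2*n*hermiteP (n-1) x * hermiteP m x * hermiteP l x
        + 2*m*(hermiteP n x * hermiteP (m-1) x * hermiteP l x)
        + 2*l*(hermiteP n x * hermiteP m x * hermiteP (l-1) x))
    hd3 (polyFun_H3 n m l)
    ((((((polyFun_hermiteP (n-1)).const_mul (2*(n:ℝ))).mul (polyFun_hermiteP m)).mul
        (polyFun_hermiteP l)).add
      ((polyFun_H3 n (m-1) l).const_mul (2*(m:ℝ)))).add
        ((polyFun_H3 n m (l-1)).const_mul (2*(l:ℝ))))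
  have hsum : ∫ x : ℝ, (2*n*hermiteP (n-1) x * hermiteP m x * hermiteP l x
        + 2*m*(hermiteP n x * hermiteP (m-1) x * hermiteP l x)
        + 2*l*(hermiteP n x * hermiteP m x * hermiteP (l-1) x)) * Real.exp (-2 * x ^ 2)
      = 2*n*Jint (n-1) m l + 2*m*Jint n (m-1) l + 2*l*Jint n m (l-1) := by
    unfold Jint
    have ha : Integrable fun x : ℝ =>
        2*(n:ℝ) * (hermiteP (n-1) x * hermiteP m x * hermiteP l x * Real.exp (-2*x^2)) := by
      simpa [mul_assoc] using (integrable_H3 (n-1) m l).const_mul (2*(n:ℝ))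
    have hb : Integrable fun x : ℝ =>
        2*(m:ℝ) * (hermiteP n x * hermiteP (m-1) x * hermiteP l x * Real.exp (-2*x^2)) := by
      simpa [mul_assoc] using (integrable_H3 n (m-1) l).const_mul (2*(m:ℝ))
    have hc : Integrable fun x : ℝ =>
        2*(l:ℝ) * (hermiteP n x * hermiteP m x * hermiteP (l-1) x * Real.exp (-2*x^2)) := by
      simpa [mul_assoc] using (integrable_H3 n m (l-1)).const_mul (2*(l:ℝ))
    calc (∫ x : ℝ, (2*(n:ℝ)*hermiteP (n-1) x * hermiteP m x * hermiteP l x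
        + 2*m*(hermiteP n x * hermiteP (m-1) x * hermiteP l x)
        + 2*l*(hermiteP n x * hermiteP m x * hermiteP (l-1) x)) * Real.exp (-2 * x ^ 2))
        = ∫ x : ℝ,
          (2*(n:ℝ) * (hermiteP (n-1) x * hermiteP m x * hermiteP l x * Real.exp (-2*x^2))
          + 2*(m:ℝ) * (hermiteP n x * hermiteP (m-1) x * hermiteP l x * Real.exp (-2*x^2)))
          + 2*(l:ℝ) * (hermiteP n x * hermiteP m x * hermiteP (l-1) x * Real.exp (-2*x^2)) := by
          congr 1; ext x; ring
      _ = (∫ x : ℝ,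
            2*(n:ℝ) * (hermiteP (n-1) x * hermiteP m x * hermiteP l x * Real.exp (-2*x^2))
            + 2*(m:ℝ) * (hermiteP n x * hermiteP (m-1) x * hermiteP l x * Real.exp (-2*x^2)))
          + ∫ x : ℝ,
            2*(l:ℝ) * (hermiteP n x * hermiteP m x * hermiteP (l-1) x * Real.exp (-2*x^2)) :=
          integral_add (ha.add hb) hc
      _ = (∫ x : ℝ,
            2*(n:ℝ) * (hermiteP (n-1) x * hermiteP m x * hermiteP l x * Real.exp (-2*x^2)))
          + (∫ x : ℝ,
            2*(m:ℝ) * (hermiteP n x * hermiteP (m-1) x * hermiteP l x * Real.exp (-2*x^2)))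
          + ∫ x : ℝ,
            2*(l:ℝ) * (hermiteP n x * hermiteP m x * hermiteP (l-1) x * Real.exp (-2*x^2)) := by
          rw [integral_add ha hb]
      _ = 2*(n:ℝ)*Jint (n-1) m l + 2*(m:ℝ)*Jint n (m-1) l + 2*(l:ℝ)*Jint n m (l-1) := by
          unfold Jint
          rw [integral_const_mul, integral_const_mul, integral_const_mul]
  rw [hsucc, hibp, hsum]
  ring

/-- Extended double factorial of an odd integer `a`:
`a‼ = 2^((a+1)/2) * Γ(a/2 + 1) / √π`. -/
noncomputable def ddfact (a : ℤ) : ℝ :=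
  (2 : ℝ) ^ ((a + 1) / 2) * Real.Gamma ((a : ℝ) / 2 + 1) / Real.sqrt π

lemma ddfact_step (a : ℤ) (ha : Odd a) : ddfact a = a * ddfact (a - 2) := by
  obtain ⟨k, rfl⟩ := ha
  unfold ddfact
  have h1 : (2 * k + 1 + 1) / 2 = k + 1 := by omega
  have h2 : (2 * k + 1 - 2 + 1) / 2 = k := by omega
  rw [h1, h2]
  have h3 : ((2 * k + 1 : ℤ) : ℝ) / 2 + 1 = ((k : ℝ) + 1 / 2) + 1 := by push_cast; ring
  have h4 : ((2 * k + 1 - 2 : ℤ) : ℝ) / 2 + 1 = (k : ℝ) + 1 / 2 := by push_cast; ring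
  have hne : (k : ℝ) + 1 / 2 ≠ 0 := by
    intro hcon
    have : ((2 * k + 1 : ℤ) : ℝ) = 0 := by push_cast; linarith
    have : (2 * k + 1 : ℤ) = 0 := by exact_mod_cast this
    omega
  rw [h3, h4, Real.Gamma_add_one hne, zpow_add_one₀ (by norm_num : (2:ℝ) ≠ 0)]
  push_cast
  ring

lemma ddfact_neg_one : ddfact (-1) = 1 := by
  unfold ddfact
  norm_num
  rw [Real.Gamma_one_half_eq]
  exact div_self (by positivity)

lemma key_identity (p q r nn mm ll : ℤ) (hp : Odd p) (hq : Odd q)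
    (h1 : p + q = 2 * nn) (h2 : p + r + 2 = 2 * mm) (h3 : q + r + 2 = 2 * ll) :
    ddfact p * ddfact q * ddfact r
      = mm * (ddfact (p - 2) * ddfact q * ddfact r)
        + ll * (ddfact p * ddfact (q - 2) * ddfact r)
        - nn * (ddfact (p - 2) * ddfact (q - 2) * ddfact (r + 2)) := by
  have hr2 : Odd (r + 2) := by
    obtain ⟨k, hk⟩ := hp; exact ⟨mm - k - 1, by omega⟩
  rw [ddfact_step p hp, ddfact_step q hq, ddfact_step (r + 2) hr2]
  have e : r + 2 - 2 = r := by ring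
  rw [e]
  have hn : (nn : ℝ) = ((p : ℝ) + q) / 2 := by
    have := congrArg (Int.cast : ℤ → ℝ) h1; push_cast at this; linarith
  have hm : (mm : ℝ) = ((p : ℝ) + r + 2) / 2 := by
    have := congrArg (Int.cast : ℤ → ℝ) h2; push_cast at this; linarith
  have hl : (ll : ℝ) = ((q : ℝ) + r + 2) / 2 := by
    have := congrArg (Int.cast : ℤ → ℝ) h3; push_cast at this; linarith
  rw [hn, hm, hl]
  push_cast
  ring

noncomputable def G (n m l : ℕ) : ℝ :=
  if Even (n + m + l) then
    ddfact ((n : ℤ) + m - l - 1) * ddfact ((n : ℤ) - m + l - 1) *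
      ddfact (-(n : ℤ) + m + l - 1)
  else 0

lemma G_swap12 (n m l : ℕ) : G n m l = G m n l := by
  unfold G
  rw [show m + n + l = n + m + l from by omega]
  by_cases h : Even (n + m + l)
  · rw [if_pos h, if_pos h]
    have e1 : (m : ℤ) + n - l - 1 = (n : ℤ) + m - l - 1 := by ring
    have e2 : (m : ℤ) - n + l - 1 = -(n : ℤ) + m + l - 1 := by ring
    have e3 : -(m : ℤ) + n + l - 1 = (n : ℤ) - m + l - 1 := by ring
    rw [e1, e2, e3]; ring
  · rw [if_neg h, if_neg h]

lemma G_swap13 (n m l : ℕ) : G n m l = G l m n := by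
  unfold G
  rw [show l + m + n = n + m + l from by omega]
  by_cases h : Even (n + m + l)
  · rw [if_pos h, if_pos h]
    have e1 : (l : ℤ) + m - n - 1 = -(n : ℤ) + m + l - 1 := by ring
    have e2 : (l : ℤ) - m + n - 1 = (n : ℤ) - m + l - 1 := by ring
    have e3 : -(l : ℤ) + m + n - 1 = (n : ℤ) + m - l - 1 := by ring
    rw [e1, e2, e3]; ring
  · rw [if_neg h, if_neg h]

lemma G_rec (n m l : ℕ) :
    G (n + 1) m l = (m : ℝ) * G n (m - 1) l + (l : ℝ) * G n m (l - 1)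
      - (n : ℝ) * G (n - 1) m l := by
  by_cases h : Even (n + 1 + m + l)
  · obtain ⟨t, ht⟩ := h
    have ht' : n + 1 + m + l = 2 * t := by omega
    have hp : Odd ((n : ℤ) + m - l) := ⟨(t : ℤ) - l - 1, by omega⟩
    have hq : Odd ((n : ℤ) - m + l) := ⟨(t : ℤ) - m - 1, by omega⟩
    have hkey := key_identity ((n : ℤ) + m - l) ((n : ℤ) - m + l) (-(n : ℤ) + m + l - 2)
      n m l hp hq (by ring) (by ring) (by ring)
    have hL : G (n + 1) m l = ddfact ((n : ℤ) + m - l) * ddfact ((n : ℤ) - m + l) *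
        ddfact (-(n : ℤ) + m + l - 2) := by
      unfold G
      rw [if_pos ⟨t, by omega⟩]
      have e1 : ((n + 1 : ℕ) : ℤ) + m - l - 1 = (n : ℤ) + m - l := by push_cast; ring
      have e2 : ((n + 1 : ℕ) : ℤ) - m + l - 1 = (n : ℤ) - m + l := by push_cast; ring
      have e3 : -((n + 1 : ℕ) : ℤ) + m + l - 1 = -(n : ℤ) + m + l - 2 := by push_cast; ring
      rw [e1, e2, e3]
    have hM : (m : ℝ) * G n (m - 1) l
        = (m : ℝ) * (ddfact ((n : ℤ) + m - l - 2) * ddfact ((n : ℤ) - m + l) *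
            ddfact (-(n : ℤ) + m + l - 2)) := by
      rcases m with _ | m'
      · simp
      · congr 1
        unfold G
        rw [if_pos ⟨t - 1, by omega⟩]
        have e1 : (n : ℤ) + ((m' + 1 : ℕ) - 1 : ℕ) - l - 1
            = (n : ℤ) + (m' + 1 : ℕ) - l - 2 := by push_cast; ring
        have e2 : (n : ℤ) - ((m' + 1 : ℕ) - 1 : ℕ) + l - 1
            = (n : ℤ) - (m' + 1 : ℕ) + l := by push_cast; ring
        have e3 : -(n : ℤ) + ((m' + 1 : ℕ) - 1 : ℕ) + l - 1
            = -(n : ℤ) + (m' + 1 : ℕ) + l - 2 := by push_cast; ring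
        rw [e1, e2, e3]
    have hLl : (l : ℝ) * G n m (l - 1)
        = (l : ℝ) * (ddfact ((n : ℤ) + m - l) * ddfact ((n : ℤ) - m + l - 2) *
            ddfact (-(n : ℤ) + m + l - 2)) := by
      rcases l with _ | l'
      · simp
      · congr 1
        unfold G
        rw [if_pos ⟨t - 1, by omega⟩]
        have e1 : (n : ℤ) + m - ((l' + 1 : ℕ) - 1 : ℕ) - 1
            = (n : ℤ) + m - (l' + 1 : ℕ) := by push_cast; ring
        have e2 : (n : ℤ) - m + ((l' + 1 : ℕ) - 1 : ℕ) - 1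
            = (n : ℤ) - m + (l' + 1 : ℕ) - 2 := by push_cast; ring
        have e3 : -(n : ℤ) + m + ((l' + 1 : ℕ) - 1 : ℕ) - 1
            = -(n : ℤ) + m + (l' + 1 : ℕ) - 2 := by push_cast; ring
        rw [e1, e2, e3]
    have hN : (n : ℝ) * G (n - 1) m l
        = (n : ℝ) * (ddfact ((n : ℤ) + m - l - 2) * ddfact ((n : ℤ) - m + l - 2) *
            ddfact (-(n : ℤ) + m + l - 2 + 2)) := by
      rcases n with _ | n'
      · simp
      · congr 1
        unfold G
        rw [if_pos ⟨t - 1, by omega⟩]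
        have e1 : (((n' + 1 : ℕ) - 1 : ℕ) : ℤ) + m - l - 1
            = ((n' + 1 : ℕ) : ℤ) + m - l - 2 := by push_cast; ring
        have e2 : (((n' + 1 : ℕ) - 1 : ℕ) : ℤ) - m + l - 1
            = ((n' + 1 : ℕ) : ℤ) - m + l - 2 := by push_cast; ring
        have e3 : -(((n' + 1 : ℕ) - 1 : ℕ) : ℤ) + m + l - 1
            = -((n' + 1 : ℕ) : ℤ) + m + l - 2 + 2 := by push_cast; ring
        rw [e1, e2, e3]
    rw [hL, hM, hLl, hN, hkey]
    push_cast
    ring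
  · have hL : G (n + 1) m l = 0 := by unfold G; rw [if_neg h]
    have hM : (m : ℝ) * G n (m - 1) l = 0 := by
      rcases m with _ | m'
      · simp
      · have : G n ((m' + 1 : ℕ) - 1) l = 0 := by
          unfold G
          rw [if_neg]
          rintro ⟨s, hs⟩
          exact h ⟨s + 1, by omega⟩
        rw [this, mul_zero]
    have hLl : (l : ℝ) * G n m (l - 1) = 0 := by
      rcases l with _ | l'
      · simp
      · have : G n m ((l' + 1 : ℕ) - 1) = 0 := by
          unfold G
          rw [if_neg]
          rintro ⟨s, hs⟩
          exact h ⟨s + 1, by omega⟩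
        rw [this, mul_zero]
    have hN : (n : ℝ) * G (n - 1) m l = 0 := by
      rcases n with _ | n'
      · simp
      · have : G ((n' + 1 : ℕ) - 1) m l = 0 := by
          unfold G
          rw [if_neg]
          rintro ⟨s, hs⟩
          exact h ⟨s + 1, by omega⟩
        rw [this, mul_zero]
    rw [hL, hM, hLl, hN]
    ring

/-- `I n m l = √(2/π) ∫ H_n(x) H_m(x) H_l(x) e^{-2x²} dx`. -/
noncomputable def I (n m l : ℕ) : ℝ :=
  Real.sqrt (2 / π) *
    ∫ x : ℝ, hermiteP n x * hermiteP m x * hermiteP l x * Real.exp (-2 * x ^ 2)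

lemma I_eq_Jint (n m l : ℕ) : I n m l = Real.sqrt (2 / π) * Jint n m l := rfl

lemma Jint_odd (n m l : ℕ) (h : ¬ Even (n + m + l)) : Jint n m l = 0 := by
  have hodd : Odd (n + m + l) := (Nat.even_or_odd _).resolve_left h
  have hpow : (-1 : ℝ) ^ (n + m + l) = -1 := Odd.neg_one_pow hodd
  have hneg : ∀ x : ℝ,
      hermiteP n (-x) * hermiteP m (-x) * hermiteP l (-x) * Real.exp (-2 * (-x) ^ 2)
        = -(hermiteP n x * hermiteP m x * hermiteP l x * Real.exp (-2 * x ^ 2)) := by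
    intro x
    rw [hermiteP_neg, hermiteP_neg, hermiteP_neg, neg_sq]
    have : (-1 : ℝ) ^ n * hermiteP n x * ((-1 : ℝ) ^ m * hermiteP m x) *
          ((-1 : ℝ) ^ l * hermiteP l x)
        = (-1 : ℝ) ^ (n + m + l) *
            (hermiteP n x * hermiteP m x * hermiteP l x) := by
      rw [pow_add, pow_add]; ring
    rw [mul_assoc ((-1:ℝ)^n * hermiteP n x)] at this ⊢
    rw [this, hpow]
    ring
  have hint := (Measure.measurePreserving_neg (volume : Measure ℝ)).integral_comp
    (Homeomorph.neg ℝ).measurableEmbedding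
    (fun x => hermiteP n x * hermiteP m x * hermiteP l x * Real.exp (-2 * x ^ 2))
  have h2 : (∫ x : ℝ, hermiteP n (-x) * hermiteP m (-x) * hermiteP l (-x)
        * Real.exp (-2 * (-x) ^ 2))
      = -Jint n m l := by
    rw [show (∫ x : ℝ, hermiteP n (-x) * hermiteP m (-x) * hermiteP l (-x)
          * Real.exp (-2 * (-x) ^ 2))
        = ∫ x : ℝ, -(hermiteP n x * hermiteP m x * hermiteP l x * Real.exp (-2 * x ^ 2))
      from by congr 1; funext x; exact hneg x]
    rw [integral_neg]
    rfl
  have h3 : (∫ x : ℝ, hermiteP n (-x) * hermiteP m (-x) * hermiteP l (-x)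
        * Real.exp (-2 * (-x) ^ 2)) = Jint n m l := hint
  have := h2.symm.trans h3
  linarith

lemma I_rec (n m l : ℕ) :
    I (n + 1) m l = (m : ℝ) * I n (m - 1) l + (l : ℝ) * I n m (l - 1)
      - (n : ℝ) * I (n - 1) m l := by
  simp only [I_eq_Jint]
  rw [Jint_rec]
  ring

lemma I_swap12 (n m l : ℕ) : I n m l = I m n l := by
  unfold I; congr 1; congr 1; funext x; ring

lemma I_swap13 (n m l : ℕ) : I n m l = I l m n := by
  unfold I; congr 1; congr 1; funext x; ring

lemma I_base : I 0 0 0 = 1 := by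
  have hJ : Jint 0 0 0 = Real.sqrt (π / 2) := by
    unfold Jint
    simp only [hermiteP, one_mul]
    exact integral_gaussian 2
  rw [I_eq_Jint, hJ, ← Real.sqrt_mul (by positivity)]
  rw [show (2 / π) * (π / 2) = 1 from by field_simp]
  exact Real.sqrt_one

lemma G_base : G 0 0 0 = 1 := by
  unfold G
  rw [if_pos (by simp)]
  norm_num [ddfact_neg_one]

lemma I_eq_G : ∀ N n m l : ℕ, n + m + l = N → I n m l = G n m l := by
  intro N
  induction N using Nat.strong_induction_on with
  | _ N ih =>
    have aux : ∀ n m l : ℕ, n + m + l = N → 0 < n → I n m l = G n m l := by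
      intro n m l hsum hn
      obtain ⟨k, rfl⟩ : ∃ k, n = k + 1 := ⟨n - 1, by omega⟩
      rw [I_rec k m l,
        ih (k + (m - 1) + l) (by omega) k (m - 1) l rfl,
        ih (k + m + (l - 1)) (by omega) k m (l - 1) rfl,
        ih ((k - 1) + m + l) (by omega) (k - 1) m l rfl]
      exact (G_rec k m l).symm
    intro n m l hsum
    rcases Nat.eq_zero_or_pos n with hn | hn
    · subst hn
      rcases Nat.eq_zero_or_pos m with hm | hm
      · subst hm
        rcases Nat.eq_zero_or_pos l with hl | hl
        · subst hl
          subst hsum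
          rw [I_base, G_base]
        · rw [I_swap13, aux l 0 0 (by omega) hl, ← G_swap13]
      · rw [I_swap12, aux m 0 l (by omega) hm, ← G_swap12]
    · exact aux n m l hsum hn

theorem I3_even_eq (n m l : ℕ) (h : Even (n + m + l)) :
    I n m l =
      ddfact ((n : ℤ) + m - l - 1) * ddfact ((n : ℤ) - m + l - 1) *
        ddfact (-(n : ℤ) + m + l - 1) := by
  rw [I_eq_G (n + m + l) n m l rfl]
  unfold G
  rw [if_pos h]
end

section
/- The sequence m ↦ I_{2m,2m,2m} / (2·√2 · (2m/e)^{3m}) tends to 1 as m → ∞ (limit along the filter atTop on ℕ). -/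
open MeasureTheory Real

open Polynomial Filter


noncomputable def P : ℕ → ℝ[X]
  | 0 => 1
  | 1 => 2 * X
  | n + 2 => 2 * X * P (n+1) - 2 * ((n : ℝ[X]) + 1) * P n

lemma hermiteP_eval : ∀ (n : ℕ) (x : ℝ), hermiteP n x = (P n).eval x
  | 0, x => by simp [hermiteP, P]
  | 1, x => by simp [hermiteP, P]
  | n + 2, x => by
    simp only [hermiteP, P, hermiteP_eval (n+1), hermiteP_eval n, eval_sub, eval_mul,
      eval_ofNat, eval_X, eval_add, eval_natCast, eval_one]

lemma P_mulX (n : ℕ) : 2 * X * P n = P (n+1) + 2 * (n : ℝ[X]) * P (n-1) := by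
  cases n with
  | zero => simp [P]
  | succ m =>
    show 2 * X * P (m+1) = P (m+2) + 2 * ((m+1 : ℕ) : ℝ[X]) * P m
    rw [show P (m+2) = 2 * X * P (m+1) - 2 * ((m : ℝ[X]) + 1) * P m from rfl]
    push_cast
    ring

lemma P_deriv : ∀ n : ℕ, derivative (P n) = 2 * (n : ℝ[X]) * P (n-1)
  | 0 => by simp [P]
  | 1 => by
    show derivative (2 * X) = 2 * ((1:ℕ) : ℝ[X]) * P 0
    simp [P]
  | n + 2 => by
    show derivative (2 * X * P (n+1) - 2 * ((n : ℝ[X]) + 1) * P n)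
        = 2 * ((n+2 : ℕ) : ℝ[X]) * P (n+1)
    simp only [derivative_sub, derivative_mul, derivative_X, derivative_ofNat,
      derivative_add, derivative_natCast, derivative_one]
    rw [P_deriv (n+1), P_deriv n]
    simp only [Nat.add_sub_cancel]
    push_cast
    linear_combination (2 * ((n : ℝ[X]) + 1)) * P_mulX n

lemma integrable_monGauss (i : ℕ) :
    Integrable fun x : ℝ => x ^ i * Real.exp (-2 * x ^ 2) := by
  have him := integrable_rpow_mul_exp_neg_mul_sq (by norm_num : (0:ℝ) < 2)
    (s := (i : ℝ)) (lt_of_lt_of_le neg_one_lt_zero (Nat.cast_nonneg i))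
  simpa using him

lemma integrable_polyGauss (Q : ℝ[X]) :
    Integrable fun x : ℝ => Q.eval x * Real.exp (-2 * x ^ 2) := by
  have h : (fun x : ℝ => Q.eval x * Real.exp (-2 * x ^ 2))
      = fun x => ∑ i ∈ Finset.range (Q.natDegree + 1),
          Q.coeff i * (x ^ i * Real.exp (-2 * x ^ 2)) := by
    funext x
    rw [Polynomial.eval_eq_sum_range, Finset.sum_mul]
    exact Finset.sum_congr rfl fun i _ => by ring
  rw [h]
  exact integrable_finset_sum _ fun i _ => (integrable_monGauss i).const_mul _

lemma tendsto_polyGauss (Q : ℝ[X]) :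
    Tendsto (fun x : ℝ => Q.eval x * Real.exp (-2 * x ^ 2)) (cocompact ℝ) (nhds 0) := by
  have h : (fun x : ℝ => Q.eval x * Real.exp (-2 * x ^ 2))
      = fun x => ∑ i ∈ Finset.range (Q.natDegree + 1),
          Q.coeff i * (x ^ i * Real.exp (-2 * x ^ 2)) := by
    funext x
    rw [Polynomial.eval_eq_sum_range, Finset.sum_mul]
    exact Finset.sum_congr rfl fun i _ => by ring
  rw [h]
  have : (0:ℝ) = ∑ i ∈ Finset.range (Q.natDegree + 1), Q.coeff i * 0 := by simp
  rw [this]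
  refine tendsto_finset_sum _ fun i _ => Tendsto.const_mul _ ?_
  have hrb := tendsto_rpow_abs_mul_exp_neg_mul_sq_cocompact (by norm_num : (0:ℝ) < 2) i
  rw [tendsto_zero_iff_norm_tendsto_zero]
  convert hrb using 2 with x
  rw [norm_mul, Real.norm_eq_abs, Real.norm_eq_abs, abs_pow, Real.abs_exp,
    ← Real.rpow_natCast |x| i]

lemma integral_deriv_polyGauss (Q : ℝ[X]) :
    ∫ x : ℝ, (derivative Q - 4 * X * Q).eval x * Real.exp (-2 * x ^ 2) = 0 := by
  set R := derivative Q - 4 * X * Q with hR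
  set g := fun x : ℝ => Q.eval x * Real.exp (-2 * x ^ 2) with hg
  have hderiv : ∀ x : ℝ, HasDerivAt g (R.eval x * Real.exp (-2 * x ^ 2)) x := by
    intro x
    have h1 : HasDerivAt (fun y : ℝ => Q.eval y) (Q.derivative.eval x) x := Q.hasDerivAt x
    have hx : HasDerivAt (fun y : ℝ => -2 * y ^ 2) (-2 * (2 * x)) x := by
      simpa using (hasDerivAt_pow 2 x).const_mul (-2:ℝ)
    have h2 := hx.exp
    have h3 : HasDerivAt g _ x := h1.mul h2
    convert h3 using 1
    show eval x (derivative Q - 4 * X * Q) * _ = _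
    simp only [hR, eval_sub, eval_mul, eval_ofNat, eval_X]
    ring
  have hint : Integrable fun x : ℝ => R.eval x * Real.exp (-2 * x ^ 2) := integrable_polyGauss R
  have htop : Tendsto g atTop (nhds 0) :=
    (tendsto_polyGauss Q).mono_left (by rw [cocompact_eq_atBot_atTop]; exact le_sup_right)
  have hbot : Tendsto g atBot (nhds 0) :=
    (tendsto_polyGauss Q).mono_left (by rw [cocompact_eq_atBot_atTop]; exact le_sup_left)
  have h1 : ∫ x in Set.Iic (0:ℝ), R.eval x * Real.exp (-2 * x ^ 2) = g 0 - 0 :=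
    MeasureTheory.integral_Iic_of_hasDerivAt_of_tendsto
      (hderiv 0).continuousAt.continuousWithinAt (fun x _ => hderiv x)
      hint.integrableOn hbot
  have h2 : ∫ x in Set.Ioi (0:ℝ), R.eval x * Real.exp (-2 * x ^ 2) = 0 - g 0 :=
    MeasureTheory.integral_Ioi_of_hasDerivAt_of_tendsto
      (hderiv 0).continuousAt.continuousWithinAt (fun x _ => hderiv x)
      hint.integrableOn htop
  rw [← intervalIntegral.integral_Iic_add_Ioi hint.integrableOn hint.integrableOn, h1, h2]
  ring

noncomputable def T (a b c : ℕ) : ℝ :=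
  ∫ x : ℝ, (P a * P b * P c).eval x * Real.exp (-2 * x ^ 2)

lemma T_symm1 (a b c : ℕ) : T b a c = T a b c := by
  unfold T
  rw [show P b * P a * P c = P a * P b * P c from by ring]

lemma T_symm2 (a b c : ℕ) : T c b a = T a b c := by
  unfold T
  rw [show P c * P b * P a = P a * P b * P c from by ring]

lemma T_rec (a b c : ℕ) :
    T (a+1) b c = b * T a (b-1) c + c * T a b (c-1) - a * T (a-1) b c := by
  have hkey := integral_deriv_polyGauss (P a * P b * P c)
  have hpoly : derivative (P a * P b * P c) - 4 * X * (P a * P b * P c) =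
      (2 * (b : ℝ[X])) * (P a * P (b-1) * P c) + (2 * (c : ℝ[X])) * (P a * P b * P (c-1))
        - 2 * (P (a+1) * P b * P c) - (2 * (a : ℝ[X])) * (P (a-1) * P b * P c) := by
    rw [derivative_mul, derivative_mul, P_deriv a, P_deriv b, P_deriv c]
    linear_combination (-2 : ℝ[X]) * (P b * P c) * P_mulX a
  rw [hpoly] at hkey
  have hfun : (fun x : ℝ => ((2 * (b : ℝ[X])) * (P a * P (b-1) * P c)
        + (2 * (c : ℝ[X])) * (P a * P b * P (c-1))
        - 2 * (P (a+1) * P b * P c) - (2 * (a : ℝ[X])) * (P (a-1) * P b * P c)).eval x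
        * Real.exp (-2 * x ^ 2))
      = fun x : ℝ => ((2 * (b:ℝ)) * ((P a * P (b-1) * P c).eval x * Real.exp (-2 * x ^ 2))
          + (2 * (c:ℝ)) * ((P a * P b * P (c-1)).eval x * Real.exp (-2 * x ^ 2)))
        - (2 * ((P (a+1) * P b * P c).eval x * Real.exp (-2 * x ^ 2))
          + (2 * (a:ℝ)) * ((P (a-1) * P b * P c).eval x * Real.exp (-2 * x ^ 2))) := by
    funext x
    simp only [eval_sub, eval_add, eval_mul, eval_ofNat, eval_natCast]
    ring
  rw [hfun] at hkey
  rw [integral_sub, integral_add, integral_const_mul, integral_const_mul, integral_add,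
    integral_const_mul, integral_const_mul] at hkey
  · have h2 : (2:ℝ) ≠ 0 := by norm_num
    unfold T
    linarith [hkey]
  · exact (integrable_polyGauss _).const_mul _
  · exact (integrable_polyGauss _).const_mul _
  · exact ((integrable_polyGauss _).const_mul _)
  · exact (integrable_polyGauss _).const_mul _
  · exact ((integrable_polyGauss _).const_mul _).add ((integrable_polyGauss _).const_mul _)
  · exact (((integrable_polyGauss (P (a+1) * P b * P c)).const_mul 2).add
      ((integrable_polyGauss _).const_mul _))

open Nat

noncomputable def E : ℤ → ℝ := fun k => 2 ^ k * Real.Gamma (k + 1/2) / Real.sqrt π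

lemma E_succ (k : ℤ) : E (k + 1) = (2 * k + 1) * E k := by
  unfold E
  have h1 : ((k + 1 : ℤ) : ℝ) + 1/2 = ((k : ℝ) + 1/2) + 1 := by push_cast; ring
  rw [h1, Real.Gamma_add_one (by
    intro h
    have : ((2 * k : ℤ) : ℝ) = ((-1 : ℤ) : ℝ) := by push_cast; linarith
    have := Int.cast_injective this
    omega)]
  rw [zpow_add₀ (by norm_num : (2:ℝ) ≠ 0)]
  push_cast; ring

lemma E_zero : E 0 = 1 := by
  unfold E
  rw [show ((0:ℤ):ℝ) + 1/2 = 1/2 by norm_num, Real.Gamma_one_half_eq]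
  rw [zpow_zero, one_mul, div_self (by positivity)]

lemma E_expand (k : ℤ) : E k = (2 * k - 1) * E (k - 1) := by
  have := E_succ (k - 1)
  simpa using this.trans (by push_cast; ring_nf)

lemma E_iden (p q r : ℤ) :
    E p * E q * E r =
      ((p : ℝ) + r) * (E p * E q * E (r-1)) + ((p : ℝ) + q) * (E p * E (q-1) * E r)
        - ((q : ℝ) + r - 1) * (E (p+1) * E (q-1) * E (r-1)) := by
  rw [E_succ p, E_expand q, E_expand r]
  push_cast; ring

noncomputable def F : ℕ → ℕ → ℕ → ℝ := fun a b c =>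
  if (a + b + c) % 2 = 0 then
    E ((a + b + c : ℤ)/2 - a) * E ((a + b + c : ℤ)/2 - b) * E ((a + b + c : ℤ)/2 - c)
  else 0

lemma F_eval {a b c t : ℕ} (h : a + b + c = 2 * t) :
    F a b c = E ((t:ℤ) - a) * E ((t:ℤ) - b) * E ((t:ℤ) - c) := by
  unfold F
  rw [if_pos (by omega)]
  have h2 : ((a:ℤ) + b + c) / 2 = t := by omega
  rw [h2]

lemma F_odd {a b c : ℕ} (h : (a + b + c) % 2 = 1) : F a b c = 0 := by
  unfold F
  rw [if_neg (by omega)]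

lemma F_rec (a b c : ℕ) :
    F (a+1) b c = b * F a (b-1) c + c * F a b (c-1) - a * F (a-1) b c := by
  rcases Nat.even_or_odd (a + 1 + b + c) with he | ho
  · obtain ⟨t, ht⟩ := he
    have ht' : a + 1 + b + c = 2 * t := by omega
    have htpos : 1 ≤ t := by omega
    set p : ℤ := (t:ℤ) - (a+1) with hp
    set q : ℤ := (t:ℤ) - b with hq
    set r : ℤ := (t:ℤ) - c with hr
    have hF : F (a+1) b c = E p * E q * E r := by
      rw [F_eval (show (a+1) + b + c = 2*t by omega)]
      rw [show ((t:ℤ) - ((a+1:ℕ):ℤ)) = p from by push_cast [hp]; ring]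
    have hTb : (b:ℝ) * F a (b-1) c = ((p:ℝ) + (r:ℝ)) * (E p * E q * E (r-1)) := by
      have hbZ : (b:ℤ) = p + r := by rw [hp, hr]; omega
      rcases Nat.eq_zero_or_pos b with hb0 | hbp
      · have : ((p:ℝ) + (r:ℝ)) = 0 := by
          have : ((p + r : ℤ) : ℝ) = ((0:ℤ):ℝ) := by rw [← hbZ, hb0]; norm_num
          push_cast at this; linarith
        rw [hb0, this]; simp
      · have hFb : F a (b-1) c = E p * E q * E (r-1) := by
          rw [F_eval (show a + (b-1) + c = 2*(t-1) by omega)]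
          rw [show (((t-1:ℕ)):ℤ) - (a:ℤ) = p from by omega,
              show (((t-1:ℕ)):ℤ) - ((b-1:ℕ):ℤ) = q from by omega,
              show (((t-1:ℕ)):ℤ) - (c:ℤ) = r - 1 from by omega]
        rw [hFb]
        congr 1
        have : ((b:ℤ):ℝ) = ((p + r : ℤ):ℝ) := by exact congrArg (fun z : ℤ => (z:ℝ)) hbZ
        push_cast at this ⊢; linarith
    have hTc : (c:ℝ) * F a b (c-1) = ((p:ℝ) + (q:ℝ)) * (E p * E (q-1) * E r) := by
      have hcZ : (c:ℤ) = p + q := by rw [hp, hq]; omega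
      rcases Nat.eq_zero_or_pos c with hc0 | hcp
      · have : ((p:ℝ) + (q:ℝ)) = 0 := by
          have : ((p + q : ℤ) : ℝ) = ((0:ℤ):ℝ) := by rw [← hcZ, hc0]; norm_num
          push_cast at this; linarith
        rw [hc0, this]; simp
      · have hFc : F a b (c-1) = E p * E (q-1) * E r := by
          rw [F_eval (show a + b + (c-1) = 2*(t-1) by omega)]
          rw [show (((t-1:ℕ)):ℤ) - (a:ℤ) = p from by omega,
              show (((t-1:ℕ)):ℤ) - ((b:ℕ):ℤ) = q - 1 from by omega,
              show (((t-1:ℕ)):ℤ) - ((c-1:ℕ):ℤ) = r from by omega]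
        rw [hFc]
        congr 1
        have : ((c:ℤ):ℝ) = ((p + q : ℤ):ℝ) := by exact congrArg (fun z : ℤ => (z:ℝ)) hcZ
        push_cast at this ⊢; linarith
    have hTa : (a:ℝ) * F (a-1) b c = ((q:ℝ) + (r:ℝ) - 1) * (E (p+1) * E (q-1) * E (r-1)) := by
      have haZ : (a:ℤ) = q + r - 1 := by rw [hq, hr]; omega
      rcases Nat.eq_zero_or_pos a with ha0 | hap
      · have : ((q:ℝ) + (r:ℝ) - 1) = 0 := by
          have : ((q + r - 1 : ℤ) : ℝ) = ((0:ℤ):ℝ) := by rw [← haZ, ha0]; norm_num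
          push_cast at this; linarith
        rw [ha0, this]; simp
      · have hFa : F (a-1) b c = E (p+1) * E (q-1) * E (r-1) := by
          rw [F_eval (show (a-1) + b + c = 2*(t-1) by omega)]
          rw [show (((t-1:ℕ)):ℤ) - ((a-1:ℕ):ℤ) = p + 1 from by omega,
              show (((t-1:ℕ)):ℤ) - ((b:ℕ):ℤ) = q - 1 from by omega,
              show (((t-1:ℕ)):ℤ) - ((c:ℕ):ℤ) = r - 1 from by omega]
        rw [hFa]
        congr 1
        have : ((a:ℤ):ℝ) = ((q + r - 1 : ℤ):ℝ) := by exact congrArg (fun z : ℤ => (z:ℝ)) haZ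
        push_cast at this ⊢; linarith
    rw [hF, hTb, hTc, hTa]
    exact E_iden p q r
  · obtain ⟨k, hk⟩ := ho
    have h1 : F (a+1) b c = 0 := F_odd (by omega)
    have h2 : (b:ℝ) * F a (b-1) c = 0 := by
      rcases Nat.eq_zero_or_pos b with hb0 | hbp
      · rw [hb0]; simp
      · rw [F_odd (by omega)]; simp
    have h3 : (c:ℝ) * F a b (c-1) = 0 := by
      rcases Nat.eq_zero_or_pos c with hc0 | hcp
      · rw [hc0]; simp
      · rw [F_odd (by omega)]; simp
    have h4 : (a:ℝ) * F (a-1) b c = 0 := by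
      rcases Nat.eq_zero_or_pos a with ha0 | hap
      · rw [ha0]; simp
      · rw [F_odd (by omega)]; simp
    rw [h1, h2, h3, h4]; ring


lemma F_symm1 (a b c : ℕ) : F b a c = F a b c := by
  unfold F
  rw [show b + a + c = a + b + c from by omega,
      show ((b:ℤ) + a + c) = ((a:ℤ) + b + c) from by ring]
  split_ifs with h
  · ring
  · rfl

lemma F_symm2 (a b c : ℕ) : F c b a = F a b c := by
  unfold F
  rw [show c + b + a = a + b + c from by omega,
      show ((c:ℤ) + b + a) = ((a:ℤ) + b + c) from by ring]
  split_ifs with h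
  · ring
  · rfl

lemma T_base : T 0 0 0 = Real.sqrt (π / 2) := by
  unfold T
  simp only [P, one_mul, mul_one, eval_one]
  simpa using integral_gaussian 2

lemma T_val : ∀ N a b c : ℕ, a + b + c = N → T a b c = Real.sqrt (π/2) * F a b c := by
  intro N
  induction N using Nat.strong_induction_on with
  | _ N IH =>
    have main : ∀ a b c : ℕ, a + 1 + b + c = N →
        T (a+1) b c = Real.sqrt (π/2) * F (a+1) b c := by
      intro a b c hN
      rw [T_rec a b c,
        IH (a + (b-1) + c) (by omega) a (b-1) c rfl,
        IH (a + b + (c-1)) (by omega) a b (c-1) rfl,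
        IH ((a-1) + b + c) (by omega) (a-1) b c rfl,
        F_rec a b c]
      ring
    intro a b c hN
    match a, b, c with
    | 0, 0, 0 =>
      rw [T_base]
      have : F 0 0 0 = 1 := by
        rw [F_eval (show 0 + 0 + 0 = 2 * 0 from rfl)]
        simp [E_zero]
      rw [this, mul_one]
    | a+1, b, c => exact main a b c (by omega)
    | 0, b+1, c =>
      rw [← T_symm1, ← F_symm1]
      exact main b 0 c (by omega)
    | 0, 0, c+1 =>
      rw [← T_symm2, ← F_symm2]
      exact main c 0 0 (by omega)


lemma I_eq (m : ℕ) : I (2*m) (2*m) (2*m) = E m ^ 3 := by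
  unfold I
  have h : (fun x : ℝ => hermiteP (2*m) x * hermiteP (2*m) x * hermiteP (2*m) x
        * Real.exp (-2 * x ^ 2))
      = fun x : ℝ => (P (2*m) * P (2*m) * P (2*m)).eval x * Real.exp (-2 * x ^ 2) := by
    funext x
    simp [hermiteP_eval, eval_mul]
  rw [h]
  show Real.sqrt (2/π) * T (2*m) (2*m) (2*m) = E m ^ 3
  rw [T_val (6*m) _ _ _ (by ring), ← mul_assoc]
  have h1 : Real.sqrt (2/π) * Real.sqrt (π/2) = 1 := by
    rw [← Real.sqrt_mul (by positivity)]
    rw [show (2/π) * (π/2) = 1 from by field_simp]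
    exact Real.sqrt_one
  rw [h1, one_mul, F_eval (show 2*m + 2*m + 2*m = 2*(3*m) from by ring),
    show ((3*m:ℕ):ℤ) - ((2*m:ℕ):ℤ) = (m:ℤ) from by push_cast; ring]
  ring

lemma E_nat (m : ℕ) : E m = (2 * m)! / (2 ^ m * m !) := by
  induction m with
  | zero => simpa using E_zero
  | succ n ih =>
    rw [show ((n+1 : ℕ) : ℤ) = (n : ℤ) + 1 from by push_cast; ring, E_succ, ih]
    rw [show 2 * (n+1) = (2*n) + 1 + 1 from by ring, Nat.factorial_succ, Nat.factorial_succ,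
      Nat.factorial_succ]
    have hn : (n ! : ℝ) ≠ 0 := by positivity
    push_cast
    field_simp
    ring

lemma E_ratio (m : ℕ) (hm : 1 ≤ m) :
    E m / (Real.sqrt 2 * ((2 * m : ℝ) / Real.exp 1) ^ m)
      = Stirling.stirlingSeq (2*m) / Stirling.stirlingSeq m := by
  rw [E_nat, Stirling.stirlingSeq, Stirling.stirlingSeq]
  have hmR : (0:ℝ) < m := by exact_mod_cast hm
  have h2m : Real.sqrt (2 * (2*m : ℕ)) = Real.sqrt 2 * Real.sqrt (2 * (m:ℕ)) := by
    rw [← Real.sqrt_mul (by norm_num)]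
    congr 1
    push_cast
    ring
  rw [h2m]
  have hs2 : Real.sqrt 2 ≠ 0 := by positivity
  have hs2m : Real.sqrt (2 * (m:ℕ)) ≠ 0 := by positivity
  have hfac : ((m ! : ℕ) : ℝ) ≠ 0 := by positivity
  have hexp : Real.exp 1 ≠ 0 := by positivity
  have hpow : ((2 * m : ℝ) / Real.exp 1) ^ m ≠ 0 := by positivity
  have hpow2 : (((2*m : ℕ) : ℝ) / Real.exp 1) ^ (2*m) ≠ 0 := by positivity
  have hpowm : ((m : ℝ) / Real.exp 1) ^ m ≠ 0 := by positivity
  field_simp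
  push_cast
  ring_nf

theorem I3_asymptotic :
    Filter.Tendsto
      (fun m : ℕ =>
        I (2 * m) (2 * m) (2 * m) /
          (2 * Real.sqrt 2 * ((2 * m : ℝ) / Real.exp 1) ^ (3 * m)))
      Filter.atTop (nhds 1) := by
  have h2m : Tendsto (fun m : ℕ => 2 * m) atTop atTop :=
    Filter.tendsto_atTop_atTop.mpr fun b => ⟨b, fun a ha => by omega⟩
  have hs := Stirling.tendsto_stirlingSeq_sqrt_pi
  have hs2 : Tendsto (fun m : ℕ => Stirling.stirlingSeq (2*m)) atTop (nhds (Real.sqrt π)) :=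
    hs.comp h2m
  have hpi : Real.sqrt π ≠ 0 := by positivity
  have hdiv : Tendsto (fun m : ℕ => Stirling.stirlingSeq (2*m) / Stirling.stirlingSeq m)
      atTop (nhds 1) := by
    have := hs2.div hs hpi
    rwa [div_self hpi] at this
  have hcube : Tendsto
      (fun m : ℕ => (Stirling.stirlingSeq (2*m) / Stirling.stirlingSeq m) ^ 3)
      atTop (nhds 1) := by
    have := hdiv.pow 3
    rwa [one_pow] at this
  refine hcube.congr' ?_
  filter_upwards [Filter.eventually_ge_atTop 1] with m hm
  rw [I_eq m, ← E_ratio m hm, div_pow]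
  congr 1
  rw [mul_pow, ← pow_mul,
    show Real.sqrt 2 ^ 3 = 2 * Real.sqrt 2 from by
      rw [pow_succ, Real.sq_sqrt (by norm_num : (0:ℝ) ≤ 2)],
    mul_comm m 3]
end
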